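/- Let G be a P10-free graph with all induced odd cycles of length 7 and no comparable pair; let C be an induced 7-cycle with the standard sets A_i, B_i. Let d1 d2 be an edge forming a component of order 2 in G \ N[C] such that d1 has a neighbor a ∈ A_i and d2 has a neighbor a' ∈ A_{i+2}. Then d1 is complete to A_i and d2 is complete to A_{i+2}. -/

import Mathlib

open SimpleGraph

/-- `c` lists the vertices of an induced cycle of length `n` in `G`:
the map is injective and adjacency holds exactly between consecutive vertices. -/
def IsInducedCycle {V : Type*} (G : SimpleGraph V) (n : ℕ) (c : ZMod n → V) : Prop :=
  Function.Injective c ∧ ∀ i j, G.Adj (c i) (c j) ↔ (i = j + 1 ∨ j = i + 1)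

def HasInducedCycle {V : Type*} (G : SimpleGraph V) (n : ℕ) : Prop :=
  ∃ c : ZMod n → V, IsInducedCycle G n c

/-- `G` contains an induced path on `n` vertices. -/
def HasInducedPath {V : Type*} (G : SimpleGraph V) (n : ℕ) : Prop :=
  ∃ p : Fin n → V, Function.Injective p ∧
    ∀ i j, G.Adj (p i) (p j) ↔ (i.val + 1 = j.val ∨ j.val + 1 = i.val)

/-- no pair of distinct non-adjacent vertices with comparable neighborhoods. -/
def NoComparablePair {V : Type*} (G : SimpleGraph V) : Prop :=
  ∀ u v : V, u ≠ v → ¬ G.Adj u v →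
    ¬ (G.neighborSet u ⊆ G.neighborSet v ∨ G.neighborSet v ⊆ G.neighborSet u)

/-- every induced odd cycle of `G` has length 7. -/
def OddCyclesAre7 {V : Type*} (G : SimpleGraph V) : Prop :=
  ∀ n : ℕ, 3 ≤ n → Odd n → HasInducedCycle G n → n = 7

/-- distance from a vertex to an (induced) 7-cycle given by `c`. -/
noncomputable def distToCycle {V : Type*} (G : SimpleGraph V) (c : ZMod 7 → V) (x : V) : ℕ :=
  sInf {d : ℕ | ∃ i : ZMod 7, G.dist x (c i) = d}

/-- `A_i`: vertices whose neighborhood on the cycle is exactly `{c i}`. -/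
def Aset {V : Type*} (G : SimpleGraph V) (c : ZMod 7 → V) (i : ZMod 7) : Set V :=
  {x | G.neighborSet x ∩ Set.range c = {c i}}

/-- `B_i`: vertices whose neighborhood on the cycle is exactly `{c (i-1), c (i+1)}`. -/
def Bset {V : Type*} (G : SimpleGraph V) (c : ZMod 7 → V) (i : ZMod 7) : Set V :=
  {x | G.neighborSet x ∩ Set.range c = {c (i - 1), c (i + 1)}}

/-- the closed neighborhood `N[C]` of the cycle. -/
def closedNbhd {V : Type*} (G : SimpleGraph V) (c : ZMod 7 → V) : Set V :=
  Set.range c ∪ {x | ∃ i : ZMod 7, G.Adj x (c i)}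


lemma no_triangle {V : Type*} {G : SimpleGraph V} (hodd : OddCyclesAre7 G)
    {x y z : V} (hxy : G.Adj x y) (hyz : G.Adj y z) (hzx : G.Adj z x) : False := by
  have d1 : x ≠ y := hxy.ne
  have d2 : y ≠ z := hyz.ne
  have d3 : z ≠ x := hzx.ne
  have h3 : HasInducedCycle G 3 := by
    refine ⟨![x, y, z], ?_, ?_⟩
    · intro u v huv
      fin_cases u <;> fin_cases v <;> simp_all <;> rfl
    · intro u v
      fin_cases u <;> fin_cases v <;>
        simp [hxy, hyz, hzx, hxy.symm, hyz.symm, hzx.symm] <;>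
        first
          | exact Or.inl rfl
          | exact Or.inr rfl
          | exact Fin.ne_of_val_ne (by decide)
          | exact ⟨Fin.ne_of_val_ne (by decide), Fin.ne_of_val_ne (by decide)⟩
  have := hodd 3 (by norm_num) ⟨1, by norm_num⟩ h3
  norm_num at this

lemma no_c5 {V : Type*} {G : SimpleGraph V} (hodd : OddCyclesAre7 G)
    {v0 v1 v2 v3 v4 : V}
    (e0 : G.Adj v0 v1) (e1 : G.Adj v1 v2) (e2 : G.Adj v2 v3)
    (e3 : G.Adj v3 v4) (e4 : G.Adj v4 v0)
    (n02 : ¬G.Adj v0 v2) (n03 : ¬G.Adj v0 v3) (n13 : ¬G.Adj v1 v3)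
    (n14 : ¬G.Adj v1 v4) (n24 : ¬G.Adj v2 v4)
    (d02 : v0 ≠ v2) (d03 : v0 ≠ v3) (d13 : v1 ≠ v3)
    (d14 : v1 ≠ v4) (d24 : v2 ≠ v4) : False := by
  have n20 : ¬G.Adj v2 v0 := fun h => n02 h.symm
  have n30 : ¬G.Adj v3 v0 := fun h => n03 h.symm
  have n31 : ¬G.Adj v3 v1 := fun h => n13 h.symm
  have n41 : ¬G.Adj v4 v1 := fun h => n14 h.symm
  have n42 : ¬G.Adj v4 v2 := fun h => n24 h.symm
  have h5 : HasInducedCycle G 5 := by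
    refine ⟨![v0, v1, v2, v3, v4], ?_, ?_⟩
    · intro u v huv
      fin_cases u <;> fin_cases v <;> simp_all <;> rfl
    · intro u v
      fin_cases u <;> fin_cases v <;>
        simp [e0, e1, e2, e3, e4, e0.symm, e1.symm, e2.symm, e3.symm, e4.symm,
          n02, n03, n13, n14, n24, n20, n30, n31, n41, n42] <;>
        first
          | exact Or.inl rfl
          | exact Or.inr rfl
          | exact Fin.ne_of_val_ne (by decide)
          | exact ⟨Fin.ne_of_val_ne (by decide), Fin.ne_of_val_ne (by decide)⟩
  have := hodd 5 (by norm_num) ⟨2, by norm_num⟩ h5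
  norm_num at this

lemma hasInducedPath10 {V : Type*} {G : SimpleGraph V} (p : Fin 10 → V)
    (hinj : Function.Injective p)
    (hedge : ∀ k : ℕ, (h : k + 1 < 10) → G.Adj (p ⟨k, by omega⟩) (p ⟨k + 1, h⟩))
    (hnon : ∀ i j : Fin 10, i.val + 2 ≤ j.val → ¬ G.Adj (p i) (p j)) :
    HasInducedPath G 10 := by
  refine ⟨p, hinj, fun i j => ⟨?_, ?_⟩⟩
  · intro hadj
    by_contra hcon
    push_neg at hcon
    rcases lt_trichotomy i.val j.val with h | h | h
    · exact hnon i j (by omega) hadj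
    · have : i = j := Fin.ext h
      subst this
      exact G.loopless.irrefl _ hadj
    · exact hnon j i (by omega) hadj.symm
  · rintro (h | h)
    · have h2 : (⟨i.val + 1, by omega⟩ : Fin 10) = j := Fin.ext h
      rw [← h2]
      exact hedge i.val (by omega)
    · have h2 : (⟨j.val + 1, by omega⟩ : Fin 10) = i := Fin.ext h
      rw [← h2]
      exact (hedge j.val (by omega)).symm

lemma aset_adj {V : Type*} {G : SimpleGraph V} {c : ZMod 7 → V} {m : ZMod 7} {x : V}
    (hx : x ∈ Aset G c m) : G.Adj x (c m) := by
  have h : c m ∈ G.neighborSet x ∩ Set.range c := by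
    rw [show G.neighborSet x ∩ Set.range c = {c m} from hx]
    exact Set.mem_singleton _
  exact h.1

lemma aset_nonadj {V : Type*} {G : SimpleGraph V} {c : ZMod 7 → V}
    (hc : IsInducedCycle G 7 c) {m : ZMod 7} {x : V}
    (hx : x ∈ Aset G c m) {j : ZMod 7} (h : j ≠ m) : ¬ G.Adj x (c j) := by
  intro hadj
  have hmem : c j ∈ G.neighborSet x ∩ Set.range c := ⟨hadj, ⟨j, rfl⟩⟩
  rw [show G.neighborSet x ∩ Set.range c = {c m} from hx] at hmem
  exact h (hc.1 (Set.mem_singleton_iff.mp hmem))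

lemma aset_ne_c {V : Type*} {G : SimpleGraph V} {c : ZMod 7 → V}
    (hc : IsInducedCycle G 7 c) {m : ZMod 7} {x : V}
    (hx : x ∈ Aset G c m) (j : ZMod 7) : x ≠ c j := by
  intro h
  have h1 : G.Adj x (c (j + 1)) := by
    rw [h]; exact (hc.2 j (j + 1)).mpr (Or.inr rfl)
  have h6 : G.Adj x (c (j + 6)) := by
    rw [h]
    refine (hc.2 j (j + 6)).mpr (Or.inl ?_)
    have : (6 : ZMod 7) + 1 = 0 := by decide
    rw [add_assoc, this, add_zero]
  have e1 : c (j + 1) = c m := by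
    have hmem : c (j + 1) ∈ G.neighborSet x ∩ Set.range c := ⟨h1, ⟨j + 1, rfl⟩⟩
    rw [show G.neighborSet x ∩ Set.range c = {c m} from hx] at hmem
    exact Set.mem_singleton_iff.mp hmem
  have e6 : c (j + 6) = c m := by
    have hmem : c (j + 6) ∈ G.neighborSet x ∩ Set.range c := ⟨h6, ⟨j + 6, rfl⟩⟩
    rw [show G.neighborSet x ∩ Set.range c = {c m} from hx] at hmem
    exact Set.mem_singleton_iff.mp hmem
  have : (1 : ZMod 7) = 6 := add_left_cancel (hc.1 (e1.trans e6.symm))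
  exact (by decide : (1 : ZMod 7) ≠ 6) this

set_option maxHeartbeats 3200000 in
lemma half_lemma {V : Type*} {G : SimpleGraph V} (hodd : OddCyclesAre7 G)
    (hP : ¬ HasInducedPath G 10)
    {c : ZMod 7 → V} (hc : IsInducedCycle G 7 c) {d1 d2 : V}
    (hd1r : ∀ j, d1 ≠ c j) (hd1adj : ∀ j, ¬ G.Adj d1 (c j))
    (hd2r : ∀ j, d2 ≠ c j) (hd2adj : ∀ j, ¬ G.Adj d2 (c j))
    (h12 : G.Adj d1 d2) {i : ZMod 7} {a a' : V}
    (ha : a ∈ Aset G c i) (ha' : a' ∈ Aset G c (i + 2))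
    (h1a : G.Adj d1 a) (h2a : G.Adj d2 a') :
    ∀ b ∈ Aset G c i, G.Adj d1 b := by
  intro b hb
  by_contra hbd1
  have hcadj := hc.2
  have cinj := hc.1
  have hshift : ∀ s t : ZMod 7, s ≠ t → i + s ≠ i + t :=
    fun s t h hh => h (add_left_cancel hh)
  have hne0 : ∀ t : ZMod 7, t ≠ 0 → i + t ≠ i := by
    intro t ht h
    exact ht (add_left_cancel (show i + t = i + 0 by rw [h, add_zero]))
  have ccadj : ∀ s t : ZMod 7, s = t + 1 → G.Adj (c (i + s)) (c (i + t)) :=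
    fun s t h => (hcadj _ _).mpr (Or.inl (by rw [h]; ring))
  have ccnon : ∀ s t : ZMod 7, s ≠ t + 1 → t ≠ s + 1 → ¬ G.Adj (c (i + s)) (c (i + t)) := by
    intro s t h1 h2 hadj
    rcases (hcadj _ _).mp hadj with h | h
    · exact h1 (add_left_cancel (show i + s = i + (t + 1) by rw [h]; ring))
    · exact h2 (add_left_cancel (show i + t = i + (s + 1) by rw [h]; ring))
  have ccne : ∀ s t : ZMod 7, s ≠ t → c (i + s) ≠ c (i + t) :=
    fun s t h hh => h (add_left_cancel (cinj hh))
  have hi0 : c (i + 0) = c i := by rw [add_zero]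
  -- A-set facts
  have hbc : G.Adj b (c i) := aset_adj hb
  have hbnonc : ∀ j, j ≠ i → ¬ G.Adj b (c j) := fun j h => aset_nonadj hc hb h
  have hbnec : ∀ j, b ≠ c j := aset_ne_c hc hb
  have hac : G.Adj a (c i) := aset_adj ha
  have ha'c : G.Adj a' (c (i + 2)) := aset_adj ha'
  have ha'non : ∀ j, j ≠ i + 2 → ¬ G.Adj a' (c j) := fun j h => aset_nonadj hc ha' h
  have ha'nec : ∀ j, a' ≠ c j := aset_ne_c hc ha'
  -- triangle-freeness consequences
  have n2a : ¬ G.Adj d2 a := fun h => no_triangle hodd h12 h h1a.symm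
  have n1a' : ¬ G.Adj d1 a' := fun h => no_triangle hodd h12 h2a h.symm
  have hb1 : b ≠ d1 := fun h => hd1adj i (h ▸ hbc)
  have hb2 : b ≠ d2 := fun h => hd2adj i (h ▸ hbc)
  have nba : ¬ G.Adj b a := fun h => no_triangle hodd h hac hbc.symm
  have hbnea : b ≠ a := fun h => hbd1 (h.symm ▸ h1a)
  have nbd2 : ¬ G.Adj b d2 := by
    intro hbd2
    exact no_c5 hodd hbd2 h12.symm h1a hac hbc.symm
      (fun h => hbd1 h.symm) nba n2a (hd2adj i) (hd1adj i)
      hb1 hbnea (fun h => hd2adj i (h.symm ▸ hac)) (hd2r i) (hd1r i)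
  have nba' : ¬ G.Adj b a' := by
    intro h
    refine no_c5 hodd h ha'c (ccadj 2 1 (by decide)) ?_ hbc.symm ?_ ?_ ?_ ?_ ?_ ?_ ?_ ?_ ?_ ?_
    · have := ccadj 1 0 (by decide); rwa [hi0] at this
    · exact hbnonc _ (hne0 2 (by decide))
    · exact hbnonc _ (hne0 1 (by decide))
    · exact ha'non _ (hshift 1 2 (by decide))
    · exact ha'non _ (Ne.symm (hne0 2 (by decide)))
    · have := ccnon 2 0 (by decide) (by decide); rwa [hi0] at this
    · exact hbnec _
    · exact hbnec _
    · exact ha'nec _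
    · exact ha'nec _
    · have := ccne 2 0 (by decide); rwa [hi0] at this
  have nb'ne : b ≠ a' := fun h => nbd2 (by rw [h]; exact h2a.symm)
  have na'd1 : a' ≠ d1 := fun h => hd1adj (i + 2) (h ▸ ha'c)
  -- helper non-adjacency facts in the right orientation
  have ndc1 : ∀ j, ¬ G.Adj (c j) d1 := fun j h => hd1adj j h.symm
  have ndc2 : ∀ j, ¬ G.Adj (c j) d2 := fun j h => hd2adj j h.symm
  have nca' : ∀ j, j ≠ i + 2 → ¬ G.Adj (c j) a' := fun j h hh => ha'non j h hh.symm
  have nbd1' : ¬ G.Adj b d1 := fun h => hbd1 h.symm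
  have na'd1' : ¬ G.Adj a' d1 := fun h => n1a' h.symm
  -- cycle-adjacent edges (in the orientation we need)
  have e1 : G.Adj (c i) (c (i + 6)) := by
    have := ccadj 0 6 (by decide); rwa [hi0] at this
  have e2 : G.Adj (c (i + 6)) (c (i + 5)) := ccadj 6 5 (by decide)
  have e3 : G.Adj (c (i + 5)) (c (i + 4)) := ccadj 5 4 (by decide)
  have e4 : G.Adj (c (i + 4)) (c (i + 3)) := ccadj 4 3 (by decide)
  have e5 : G.Adj (c (i + 3)) (c (i + 2)) := ccadj 3 2 (by decide)
  -- cycle non-edges starting from c i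
  have harith : ∀ t : ZMod 7, t ≠ 1 → t ≠ 6 → (0 : ZMod 7) ≠ t + 1 ∧ t ≠ 0 + 1 := by decide
  have nc1 : ∀ t : ZMod 7, t ≠ 1 → t ≠ 6 → t ≠ 0 → ¬ G.Adj (c i) (c (i + t)) := by
    intro t h1 h6 h0
    have := ccnon 0 t (harith t h1 h6).1 (harith t h1 h6).2
    rwa [hi0] at this
  have hcine : ∀ t : ZMod 7, t ≠ 0 → c i ≠ c (i + t) := by
    intro t ht
    have := ccne 0 t (Ne.symm ht); rwa [hi0] at this
  -- the induced P10
  apply hP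
  apply hasInducedPath10
    ![b, c i, c (i + 6), c (i + 5), c (i + 4), c (i + 3), c (i + 2), a', d2, d1]
  · intro u v huv
    fin_cases u <;> fin_cases v <;>
      first
        | rfl
        | exact absurd huv (hbnec _)
        | exact absurd huv (hbnec _).symm
        | exact absurd huv nb'ne
        | exact absurd huv nb'ne.symm
        | exact absurd huv hb2
        | exact absurd huv hb2.symm
        | exact absurd huv hb1
        | exact absurd huv hb1.symm
        | exact absurd huv (hcine _ (by decide))
        | exact absurd huv (hcine _ (by decide)).symm
        | exact absurd huv (ccne _ _ (by decide))
        | exact absurd huv (ccne _ _ (by decide)).symm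
        | exact absurd huv (ha'nec _)
        | exact absurd huv (ha'nec _).symm
        | exact absurd huv (hd1r _)
        | exact absurd huv (hd1r _).symm
        | exact absurd huv (hd2r _)
        | exact absurd huv (hd2r _).symm
        | exact absurd huv na'd1
        | exact absurd huv na'd1.symm
        | exact absurd huv h12.ne
        | exact absurd huv h12.ne.symm
        | exact absurd huv h2a.ne
        | exact absurd huv h2a.ne.symm
  · intro k hk
    have hk9 : k < 9 := by omega
    interval_cases k <;>
      first
        | exact hbc
        | exact e1
        | exact e2
        | exact e3
        | exact e4
        | exact e5
        | exact ha'c.symm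
        | exact h2a.symm
        | exact h12.symm
  · intro u v huv
    fin_cases u <;> fin_cases v <;>
      first
        | exact absurd huv (by decide)
        | exact hbnonc _ (hne0 6 (by decide))
        | exact hbnonc _ (hne0 5 (by decide))
        | exact hbnonc _ (hne0 4 (by decide))
        | exact hbnonc _ (hne0 3 (by decide))
        | exact hbnonc _ (hne0 2 (by decide))
        | exact nba'
        | exact nbd2
        | exact nbd1'
        | exact nc1 _ (by decide) (by decide) (by decide)
        | exact nca' _ (Ne.symm (hne0 2 (by decide)))
        | exact ndc1 _
        | exact ndc2 _
        | exact ccnon _ _ (by decide) (by decide)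
        | exact nca' _ (hshift _ 2 (by decide))
        | exact na'd1'

set_option maxHeartbeats 1600000 in
theorem stmt15 {V : Type*} [Fintype V] (G : SimpleGraph V)
    (hP : ¬ HasInducedPath G 10) (hodd : OddCyclesAre7 G)
    (hcomp : NoComparablePair G)
    (c : ZMod 7 → V) (hc : IsInducedCycle G 7 c)
    (d1 d2 : V)
    (hd1 : d1 ∉ closedNbhd G c) (hd2 : d2 ∉ closedNbhd G c)
    (h12 : G.Adj d1 d2)
    (hcompo : ∀ w : V, w ∉ closedNbhd G c → w ≠ d1 → w ≠ d2 →
      ¬ G.Adj w d1 ∧ ¬ G.Adj w d2)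
    (i : ZMod 7) (a a' : V)
    (ha : a ∈ Aset G c i) (ha' : a' ∈ Aset G c (i + 2))
    (h1a : G.Adj d1 a) (h2a : G.Adj d2 a') :
    (∀ b ∈ Aset G c i, G.Adj d1 b) ∧ (∀ b ∈ Aset G c (i + 2), G.Adj d2 b) := by
  have hd1r : ∀ j, d1 ≠ c j := fun j h => hd1 (Set.mem_union_left _ ⟨j, h.symm⟩)
  have hd1adj : ∀ j, ¬ G.Adj d1 (c j) := fun j h => hd1 (Set.mem_union_right _ ⟨j, h⟩)
  have hd2r : ∀ j, d2 ≠ c j := fun j h => hd2 (Set.mem_union_left _ ⟨j, h.symm⟩)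
  have hd2adj : ∀ j, ¬ G.Adj d2 (c j) := fun j h => hd2 (Set.mem_union_right _ ⟨j, h⟩)
  constructor
  · exact half_lemma hodd hP hc hd1r hd1adj hd2r hd2adj h12 ha ha' h1a h2a
  · -- apply the same lemma to the reflected cycle
    have hc' : IsInducedCycle G 7 (fun j => c (i + 2 - j)) := by
      constructor
      · intro u v h
        have := hc.1 h
        exact sub_right_injective this
      · intro u v
        have h2 := hc.2 (i + 2 - u) (i + 2 - v)
        constructor
        · intro h
          rcases h2.mp h with h' | h'
          · exact Or.inr (by linear_combination h')
          · exact Or.inl (by linear_combination h')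
        · rintro (h | h)
          · exact h2.mpr (Or.inr (by linear_combination h))
          · exact h2.mpr (Or.inl (by linear_combination h))
    have hrange : Set.range (fun j => c (i + 2 - j)) = Set.range c := by
      apply Set.ext
      intro x
      constructor
      · rintro ⟨j, hj⟩
        exact ⟨i + 2 - j, hj⟩
      · rintro ⟨j, hj⟩
        exact ⟨i + 2 - j, by simpa [sub_sub_cancel] using hj⟩
    have hA0 : Aset G (fun j => c (i + 2 - j)) 0 = Aset G c (i + 2) := by
      simp only [Aset, hrange, sub_zero]
    have hA2 : Aset G (fun j => c (i + 2 - j)) (0 + 2) = Aset G c i := by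
      simp only [Aset, hrange, zero_add, add_sub_cancel_right]
    have key := half_lemma hodd hP hc'
      (fun j => hd2r _) (fun j => hd2adj _) (fun j => hd1r _) (fun j => hd1adj _)
      h12.symm (i := 0) (a := a') (a' := a)
      (by rw [hA0]; exact ha') (by rw [hA2]; exact ha) h2a h1a
    intro b hb
    exact key b (by rw [hA0]; exact hb)
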